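/- Let ℓ ∈ ℕ with ℓ ≥ 1 and define ξ : ℝ → ℝ by ξ(t) = 1/(1+t²). Then for every w ∈ ℝ the Fourier transform of ξ^ℓ is given by (F{ξ^ℓ})(w) = (1/√(2π)) · (π/2^{ℓ-1}) · e^{-|w|} · p_ℓ(|w|). -/

import Mathlib

open MeasureTheory Finset

/-- The polynomial `p_ℓ(w) = Σ_{j=0}^{ℓ-1} (1/2^j) · C(ℓ+j-1, ℓ-1) · w^{ℓ-j-1}/(ℓ-j-1)!`. -/
noncomputable def pPoly (ℓ : ℕ) (w : ℝ) : ℝ :=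
  ∑ j ∈ Finset.range ℓ,
    (1 / 2 ^ j : ℝ) * (Nat.choose (ℓ + j - 1) (ℓ - 1)) * w ^ (ℓ - j - 1) /
      (Nat.factorial (ℓ - j - 1))

open Set Filter Complex


lemma majIntegrable (k : ℕ) {b : ℝ} (hb : 0 < b) :
    IntegrableOn (fun x : ℝ => x ^ k * Real.exp (-(b * x))) (Set.Ioi 0) := by
  apply integrable_of_isBigO_exp_neg (half_pos hb)
  · fun_prop
  · have h0 : Tendsto (fun x : ℝ => x ^ (k:ℝ) * Real.exp (-(b/2) * x)) atTop (nhds 0) :=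
      tendsto_rpow_mul_exp_neg_mul_atTop_nhds_zero _ _ (half_pos hb)
    have h1 : Tendsto (fun x : ℝ => x ^ k * Real.exp (-(b * x)) / Real.exp (-(b/2) * x))
        atTop (nhds 0) := by
      apply h0.congr'
      filter_upwards [eventually_gt_atTop 0] with x hx
      rw [Real.rpow_natCast, eq_div_iff (Real.exp_ne_zero _), mul_assoc, ← Real.exp_add]
      ring_nf
    have := (h1.isBigO_one ℝ).mul
      (Asymptotics.isBigO_refl (fun x : ℝ => Real.exp (-(b/2) * x)) atTop)
    simpa [div_mul_cancel₀, Real.exp_ne_zero] using this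

lemma momMeasurable (k : ℕ) (a : ℂ) :
    Continuous (fun x : ℝ => (x : ℂ) ^ k * Complex.exp (-(a * x))) := by
  continuity

lemma momNorm (k : ℕ) (a : ℂ) {x : ℝ} (hx : 0 ≤ x) :
    ‖(x : ℂ) ^ k * Complex.exp (-(a * x))‖ = x ^ k * Real.exp (-(a.re * x)) := by
  rw [norm_mul, norm_pow, Complex.norm_exp,
    Complex.norm_real, Real.norm_eq_abs, _root_.abs_of_nonneg hx]
  congr 1
  simp [Complex.neg_re, Complex.mul_re]

lemma momIntegrable (k : ℕ) {a : ℂ} (ha : 0 < a.re) :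
    IntegrableOn (fun x : ℝ => (x : ℂ) ^ k * Complex.exp (-(a * x))) (Set.Ioi 0) := by
  apply Integrable.mono' (majIntegrable k ha)
  · exact (momMeasurable k a).aestronglyMeasurable
  · filter_upwards [ae_restrict_mem measurableSet_Ioi] with x (hx : (0:ℝ) < x)
    rw [momNorm k a hx.le]

lemma momTendsto (k : ℕ) {a : ℂ} (ha : 0 < a.re) :
    Tendsto (fun x : ℝ => (x : ℂ) ^ k * Complex.exp (-(a * x))) atTop (nhds 0) := by
  rw [tendsto_zero_iff_norm_tendsto_zero]
  have h0 : Tendsto (fun x : ℝ => x ^ (k:ℝ) * Real.exp (-a.re * x)) atTop (nhds 0) :=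
    tendsto_rpow_mul_exp_neg_mul_atTop_nhds_zero _ _ ha
  apply h0.congr'
  filter_upwards [eventually_gt_atTop 0] with x hx
  rw [Real.rpow_natCast, momNorm k a hx.le, neg_mul]


lemma momDeriv (k : ℕ) (a : ℂ) (x : ℝ) :
    HasDerivAt (fun y : ℝ => (y : ℂ) ^ (k+1) * Complex.exp (-(a * y)))
      ((k+1 : ℂ) * ((x:ℂ)^k * Complex.exp (-(a*x))) - a * ((x:ℂ)^(k+1) * Complex.exp (-(a*x)))) x := by
  have h : HasDerivAt (fun z : ℂ => z ^ (k+1) * Complex.exp (-(a * z)))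
      ((k+1 : ℂ) * ((x:ℂ)^k * Complex.exp (-(a*x))) - a * ((x:ℂ)^(k+1) * Complex.exp (-(a*x)))) (x:ℝ) := by
    have h1 : HasDerivAt (fun z : ℂ => z ^ (k+1)) ((k+1 : ℂ) * (x:ℂ)^k) (x:ℝ) := by
      simpa using hasDerivAt_pow (k+1) (x : ℂ)
    have h2 : HasDerivAt (fun z : ℂ => Complex.exp (-(a * z)))
        (Complex.exp (-(a * (x:ℂ))) * -(a * 1)) (x:ℝ) :=
      ((hasDerivAt_id ((x:ℝ):ℂ)).const_mul a).neg.cexp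
    have := h1.mul h2
    refine this.congr_deriv ?_
    ring
  exact h.comp_ofReal

lemma momInt {a : ℂ} (ha : 0 < a.re) : ∀ k : ℕ,
    ∫ x in Set.Ioi (0:ℝ), (x:ℂ)^k * Complex.exp (-(a*x)) = (Nat.factorial k) / a^(k+1) := by
  have ha0 : a ≠ 0 := fun h => by simp [h] at ha
  intro k
  induction k with
  | zero =>
    have key : ∫ x in Set.Ioi (0:ℝ), Complex.exp (-(a*x)) = 0 - (-(Complex.exp (-(a*(0:ℝ))))/a) := by
      refine integral_Ioi_of_hasDerivAt_of_tendsto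
        (f := fun x : ℝ => -(Complex.exp (-(a*x)))/a) ?_ ?_ ?_ ?_
      · exact (Continuous.continuousWithinAt (by continuity))
      · intro x _
        have h2 : HasDerivAt (fun z : ℂ => -(Complex.exp (-(a * z)))/a)
            (-(Complex.exp (-(a * ((x:ℝ):ℂ))) * -(a * 1)) / a) (x:ℝ) :=
          ((((hasDerivAt_id ((x:ℝ):ℂ)).const_mul a).neg.cexp).neg).div_const a
        have := h2.comp_ofReal
        refine this.congr_deriv ?_
        field_simp
      · simpa using momIntegrable 0 ha
      · have := ((momTendsto 0 ha).neg).div_const a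
        simpa using this
    simp only [pow_zero, one_mul] at key ⊢
    rw [key]
    simp [Complex.exp_zero, Nat.factorial]
    field_simp
  | succ k ih =>
    have h0 : ((0:ℝ):ℂ)^(k+1) * Complex.exp (-(a*(0:ℝ))) = 0 := by simp
    have key : ∫ x in Set.Ioi (0:ℝ),
        ((k+1 : ℂ) * ((x:ℂ)^k * Complex.exp (-(a*x))) - a * ((x:ℂ)^(k+1) * Complex.exp (-(a*x))))
        = 0 - ((0:ℝ):ℂ)^(k+1) * Complex.exp (-(a*(0:ℝ))) := by
      refine integral_Ioi_of_hasDerivAt_of_tendsto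
        (f := fun x : ℝ => (x:ℂ)^(k+1) * Complex.exp (-(a*x))) ?_ ?_ ?_ ?_
      · exact (Continuous.continuousWithinAt (by continuity))
      · intro x _; exact momDeriv k a x
      · exact ((momIntegrable k ha).const_mul _).sub ((momIntegrable (k+1) ha).const_mul a)
      · simpa using momTendsto (k+1) ha
    rw [integral_sub ((momIntegrable k ha).const_mul _) ((momIntegrable (k+1) ha).const_mul a),
      integral_const_mul, integral_const_mul, ih, h0] at key
    have hak : a^(k+1) ≠ 0 := pow_ne_zero _ ha0
    have hfac : ((Nat.factorial (k+1) : ℂ)) = (k+1 : ℂ) * (Nat.factorial k : ℂ) := by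
      rw [Nat.factorial_succ]; push_cast; ring
    set I := ∫ x in Set.Ioi (0:ℝ), (x:ℂ)^(k+1) * Complex.exp (-(a*x)) with hI
    field_simp at key
    rw [hfac, pow_succ, eq_div_iff (mul_ne_zero hak ha0)]
    linear_combination -key

lemma re_one_add (c : ℝ) : (0:ℝ) < (1 + (c:ℂ) * Complex.I).re := by simp
lemma re_one_sub (c : ℝ) : (0:ℝ) < (1 - (c:ℂ) * Complex.I).re := by simp

noncomputable def tsInt (k : ℕ) (c : ℝ) : ℝ → ℂ := fun w =>
  ((|w| : ℝ) : ℂ)^k * Complex.exp (-((|w| : ℝ) : ℂ)) * Complex.exp (-((c * w : ℝ) * Complex.I))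

lemma tsInt_pos (k : ℕ) (c : ℝ) {x : ℝ} (hx : x ∈ Set.Ioi (0:ℝ)) :
    tsInt k c x = (x:ℂ)^k * Complex.exp (-((1 + (c:ℂ) * Complex.I) * x)) := by
  have hx' : |x| = x := abs_of_pos hx
  rw [tsInt, hx', mul_assoc, ← Complex.exp_add]
  congr 2
  push_cast
  ring

lemma tsInt_neg (k : ℕ) (c : ℝ) {x : ℝ} (hx : x ∈ Set.Ioi (0:ℝ)) :
    tsInt k c (-x) = (x:ℂ)^k * Complex.exp (-((1 - (c:ℂ) * Complex.I) * x)) := by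
  have hx' : |(-x)| = x := by rw [abs_neg, abs_of_pos hx]
  rw [tsInt, hx', mul_assoc, ← Complex.exp_add]
  congr 2
  push_cast
  ring

lemma tsInt_integrableOn_Ioi (k : ℕ) (c : ℝ) : IntegrableOn (tsInt k c) (Set.Ioi 0) := by
  exact (momIntegrable k (re_one_add c)).congr_fun
    (fun x hx => (tsInt_pos k c hx).symm) measurableSet_Ioi

lemma integrableOn_Iic_comp_neg {f : ℝ → ℂ}
    (h : IntegrableOn (fun x => f (-x)) (Set.Ioi (0:ℝ))) : IntegrableOn f (Set.Iic (0:ℝ)) := by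
  have m : MeasurableEmbedding (fun x : ℝ => -x) := (Homeomorph.neg ℝ).measurableEmbedding
  rw [← Measure.map_neg_eq_self (volume : Measure ℝ), m.integrableOn_map_iff]
  simp only [Function.comp_def, neg_preimage, neg_Iic, neg_zero]
  exact (integrableOn_Ici_iff_integrableOn_Ioi (by simp)).mpr h

lemma tsInt_integrable (k : ℕ) (c : ℝ) : Integrable (tsInt k c) := by
  rw [← integrableOn_univ, ← Set.Iic_union_Ioi (a := (0:ℝ))]
  refine IntegrableOn.union ?_ (tsInt_integrableOn_Ioi k c)
  apply integrableOn_Iic_comp_neg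
  exact (momIntegrable k (re_one_sub c)).congr_fun
    (fun x hx => (tsInt_neg k c hx).symm) measurableSet_Ioi

lemma tsInt_eval (k : ℕ) (c : ℝ) :
    ∫ w : ℝ, tsInt k c w
      = (Nat.factorial k) / (1 + (c:ℂ) * Complex.I)^(k+1)
        + (Nat.factorial k) / (1 - (c:ℂ) * Complex.I)^(k+1) := by
  have h1 : IntegrableOn (tsInt k c) (Set.Iic 0) :=
    integrableOn_Iic_comp_neg ((momIntegrable k (re_one_sub c)).congr_fun
      (fun x hx => (tsInt_neg k c hx).symm) measurableSet_Ioi)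
  rw [← intervalIntegral.integral_Iic_add_Ioi h1 (tsInt_integrableOn_Ioi k c)]
  have h2 : ∫ w in Set.Iic (0:ℝ), tsInt k c w
      = (Nat.factorial k) / (1 - (c:ℂ) * Complex.I)^(k+1) := by
    rw [show Set.Iic (0:ℝ) = Set.Iic (-(0:ℝ)) by norm_num, ← integral_comp_neg_Ioi]
    rw [setIntegral_congr_fun measurableSet_Ioi (fun x hx => tsInt_neg k c hx)]
    exact momInt (re_one_sub c) k
  have h3 : ∫ w in Set.Ioi (0:ℝ), tsInt k c w
      = (Nat.factorial k) / (1 + (c:ℂ) * Complex.I)^(k+1) := by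
    rw [setIntegral_congr_fun measurableSet_Ioi (fun x hx => tsInt_pos k c hx)]
    exact momInt (re_one_add c) k
  rw [h2, h3]
  ring

noncomputable def Ssum (m : ℕ) (u : ℂ) : ℂ :=
  ∑ j ∈ Finset.range (m+1), (Nat.choose (m+j) j : ℂ) * u^j * (1-u)^(m+1)

lemma Srec (m : ℕ) (u : ℂ) (hu : (1:ℂ) - u ≠ 0) :
    Ssum (m+1) u = Ssum m u + u^(m+1) * (1-u)^(m+1) *
      ((Nat.choose (2*m+1) (m+1) : ℂ) - u * (Nat.choose (2*m+2) (m+1) : ℂ)) := by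
  have step1 : ∀ i ∈ Finset.range (m+1),
      (Nat.choose (m+1+(i+1)) (i+1) : ℂ) * u^(i+1) * (1-u)^(m+1+1)
      = (Nat.choose (m+1+i) i : ℂ) * u^(i+1) * (1-u)^(m+1+1)
        + (Nat.choose (m+(i+1)) (i+1) : ℂ) * u^(i+1) * (1-u)^(m+1+1) := by
    intro i _
    have h : m+1+(i+1) = (m+i+1)+1 := by ring
    have h2 : m+1+i = m+i+1 := by ring
    have h3 : m+(i+1) = m+i+1 := by ring
    rw [h, h2, h3, Nat.choose_succ_succ (m+i+1) i]
    push_cast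
    ring
  have expand : Ssum (m+1) u =
      (∑ i ∈ Finset.range (m+1),
        ((Nat.choose (m+1+i) i : ℂ) * u^(i+1) * (1-u)^(m+1+1)
          + (Nat.choose (m+(i+1)) (i+1) : ℂ) * u^(i+1) * (1-u)^(m+1+1)))
        + (1-u)^(m+1+1) := by
    rw [Ssum, Finset.sum_range_succ']
    congr 1
    · exact Finset.sum_congr rfl step1
    · simp
  rw [Finset.sum_add_distrib] at expand
  have hA' : u * Ssum (m+1) u =
      (∑ i ∈ Finset.range (m+1), (Nat.choose (m+1+i) i : ℂ) * u^(i+1) * (1-u)^(m+1+1))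
        + (Nat.choose (2*m+2) (m+1) : ℂ) * u^(m+1+1) * (1-u)^(m+1+1) := by
    rw [Ssum, Finset.mul_sum, Finset.sum_range_succ,
      Finset.sum_congr rfl (fun i (_ : i ∈ Finset.range (m+1)) =>
        (by ring : u * ((Nat.choose (m+1+i) i : ℂ) * u^i * (1-u)^(m+1+1))
          = (Nat.choose (m+1+i) i : ℂ) * u^(i+1) * (1-u)^(m+1+1))),
      show m+1+(m+1) = 2*m+2 from by ring]
    ring
  have hW : ∑ j ∈ Finset.range (m+1+1), (Nat.choose (m+j) j : ℂ) * u^j * (1-u)^(m+1+1)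
      = (1-u) * Ssum m u + (Nat.choose (2*m+1) (m+1) : ℂ) * u^(m+1) * (1-u)^(m+1+1) := by
    rw [Finset.sum_range_succ, Ssum, Finset.mul_sum,
      Finset.sum_congr rfl (fun j (_ : j ∈ Finset.range (m+1)) =>
        (by ring : (1-u) * ((Nat.choose (m+j) j : ℂ) * u^j * (1-u)^(m+1))
          = (Nat.choose (m+j) j : ℂ) * u^j * (1-u)^(m+1+1))),
      show m+(m+1) = 2*m+1 from by ring]
  have hW' : ∑ j ∈ Finset.range (m+1+1), (Nat.choose (m+j) j : ℂ) * u^j * (1-u)^(m+1+1)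
      = (∑ i ∈ Finset.range (m+1), (Nat.choose (m+(i+1)) (i+1) : ℂ) * u^(i+1) * (1-u)^(m+1+1))
        + (1-u)^(m+1+1) := by
    rw [Finset.sum_range_succ']
    simp
  have key : (1-u) * Ssum (m+1) u = (1-u) * (Ssum m u + u^(m+1) * (1-u)^(m+1) *
      ((Nat.choose (2*m+1) (m+1) : ℂ) - u * (Nat.choose (2*m+2) (m+1) : ℂ))) := by
    linear_combination expand - hA' - hW' + hW
  exact mul_left_cancel₀ hu key

lemma Ssum_add (m : ℕ) (u : ℂ) (hu0 : u ≠ 0) (hu1 : (1:ℂ) - u ≠ 0) :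
    Ssum m u + Ssum m (1-u) = 1 := by
  induction m with
  | zero => simp [Ssum]
  | succ m ih =>
    have e1 := Srec m u hu1
    have e2 := Srec m (1-u) (by rw [sub_sub_cancel]; exact hu0)
    have h1 : Nat.choose (2*m+2) (m+1) = Nat.choose (2*m+1) m + Nat.choose (2*m+1) (m+1) := by
      have := Nat.choose_succ_succ (2*m+1) m
      simpa [Nat.succ_eq_add_one, show (2*m+1)+1 = 2*m+2 from by ring] using this
    have h2 : Nat.choose (2*m+1) m = Nat.choose (2*m+1) (m+1) := by
      have h := Nat.choose_symm (n := 2*m+1) (k := m+1) (by omega)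
      rw [show (2*m+1)-(m+1) = m from by omega] at h
      omega
    have hchC : (Nat.choose (2*m+2) (m+1) : ℂ) = 2 * (Nat.choose (2*m+1) (m+1) : ℂ) := by
      have : Nat.choose (2*m+2) (m+1) = 2 * Nat.choose (2*m+1) (m+1) := by omega
      exact_mod_cast this
    linear_combination e1 + e2 + ih - u^(m+1)*(1-u)^(m+1) * hchC


lemma fracId (m : ℕ) (z : ℂ) (hA : (1:ℂ) + z ≠ 0) (hB : (1:ℂ) - z ≠ 0) :
    ∑ j ∈ Finset.range (m+1), (1/2^j : ℂ) * (Nat.choose (m+1+j-1) (m+1-1) : ℂ) *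
      (1/(1 + z)^(m+1-j) + 1/(1 - z)^(m+1-j))
    = 2^(m+1) * (1/((1+z)*(1-z)))^(m+1) := by
  set u : ℂ := (1+z)/2 with hu
  have hu2 : (1:ℂ) - u = (1-z)/2 := by rw [hu]; ring
  have hu0 : u ≠ 0 := by rw [hu]; exact div_ne_zero hA two_ne_zero
  have hu1 : (1:ℂ) - u ≠ 0 := by rw [hu2]; exact div_ne_zero hB two_ne_zero
  have h := Ssum_add m u hu0 hu1
  rw [Ssum, Ssum] at h
  simp only [sub_sub_cancel] at h
  have perterm : ∀ j ∈ Finset.range (m+1),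
      (1/2^j : ℂ) * (Nat.choose (m+1+j-1) (m+1-1) : ℂ) *
        (1/(1 + z)^(m+1-j) + 1/(1 - z)^(m+1-j))
      = ((Nat.choose (m+j) j : ℂ) * u^j * (1-u)^(m+1)) * (2^(m+1) * (1/((1+z)*(1-z)))^(m+1))
        + ((Nat.choose (m+j) j : ℂ) * (1-u)^j * u^(m+1)) * (2^(m+1) * (1/((1+z)*(1-z)))^(m+1)) := by
    intro j hj
    rw [Finset.mem_range] at hj
    have hC : ((Nat.choose (m+1+j-1) (m+1-1)) : ℂ) = ((Nat.choose (m+j) j) : ℂ) := by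
      rw [show m+1+j-1 = m+j from by omega, show m+1-1 = m from by omega]
      have hs := Nat.choose_symm (n := m+j) (k := j) (by omega)
      rw [show (m+j)-j = m from by omega] at hs
      norm_cast
    rw [hC, hu2, hu]
    set n := m+1-j with hn
    rw [show m+1 = n+j from by omega,
      show (1:ℂ)/((1+z)*(1-z)) = (1/(1+z)) * (1/(1-z)) from by
        rw [one_div, one_div, one_div, mul_inv], mul_pow]
    simp only [div_pow, one_div, inv_pow, pow_add]
    field_simp
  rw [Finset.sum_congr rfl perterm, Finset.sum_add_distrib]
  trans ((∑ j ∈ Finset.range (m+1), (Nat.choose (m+j) j : ℂ) * u^j * (1-u)^(m+1))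
      + (∑ j ∈ Finset.range (m+1), (Nat.choose (m+j) j : ℂ) * (1-u)^j * u^(m+1)))
      * (2^(m+1) * (1/((1+z)*(1-z)))^(m+1))
  · conv_rhs => rw [add_mul, Finset.sum_mul, Finset.sum_mul]
  · rw [h, one_mul]

noncomputable def gFun (ℓ : ℕ) : ℝ → ℂ := fun w => ((Real.exp (-|w|) * pPoly ℓ |w| : ℝ) : ℂ)

lemma pointwise (m : ℕ) (ξ : ℝ) (v : ℝ) :
    Complex.exp ((-2 * Real.pi * v * ξ : ℝ) * Complex.I) • gFun (m+1) v
      = ∑ j ∈ Finset.range (m+1),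
        (((1 / 2 ^ j : ℝ) * (Nat.choose (m+1+j-1) (m+1-1)) / (Nat.factorial (m-j)) : ℝ) : ℂ)
          * tsInt (m-j) (2 * Real.pi * ξ) v := by
  rw [smul_eq_mul, gFun, pPoly]
  push_cast
  simp only [Finset.mul_sum]
  refine Finset.sum_congr rfl (fun j hj => ?_)
  rw [Finset.mem_range] at hj
  have hmj : m+1-j-1 = m-j := by omega
  rw [hmj, tsInt]
  push_cast
  rw [show ((-2 : ℂ) * Real.pi * v * ξ * Complex.I) = -(((2 : ℂ) * Real.pi * ξ * v) * Complex.I) from by ring]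
  ring

lemma nzA (c : ℝ) : (1:ℂ) + (c:ℂ)*Complex.I ≠ 0 := by
  intro h
  have := congrArg Complex.re h
  simp at this

lemma nzB (c : ℝ) : (1:ℂ) - (c:ℂ)*Complex.I ≠ 0 := by
  intro h
  have := congrArg Complex.re h
  simp at this

lemma prodId (c : ℝ) :
    ((1:ℂ) + (c:ℂ)*Complex.I) * ((1:ℂ) - (c:ℂ)*Complex.I) = ((1 + c^2 : ℝ) : ℂ) := by
  have : ((c:ℂ)*Complex.I)^2 = -((c:ℂ)^2) := by
    rw [mul_pow, Complex.I_sq]; ring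
  push_cast
  linear_combination -this

lemma FG (m : ℕ) (ξ : ℝ) :
    FourierTransform.fourier (gFun (m+1)) ξ
      = 2^(m+1) * ((1:ℂ)/((1 + ((2*Real.pi*ξ : ℝ):ℂ)*Complex.I)
          * (1 - ((2*Real.pi*ξ : ℝ):ℂ)*Complex.I)))^(m+1) := by
  rw [Real.fourier_real_eq_integral_exp_smul]
  simp only [pointwise m ξ]
  rw [integral_finset_sum _ (fun j _ => (tsInt_integrable (m-j) (2*Real.pi*ξ)).const_mul _)]
  simp only [integral_const_mul, tsInt_eval]
  rw [Finset.sum_congr rfl (fun j hj => ?_)]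
  · exact fracId m (((2*Real.pi*ξ : ℝ):ℂ)*Complex.I) (nzA _) (nzB _)
  · rw [Finset.mem_range] at hj
    have hk : ((Nat.factorial (m-j) : ℂ)) ≠ 0 := by
      exact_mod_cast Nat.cast_ne_zero.2 (Nat.factorial_ne_zero _)
    rw [show m-j+1 = m+1-j from by omega]
    push_cast
    field_simp

lemma gFun_eq_sum (m : ℕ) : ∀ v, gFun (m+1) v
    = ∑ j ∈ Finset.range (m+1),
        (((1 / 2 ^ j : ℝ) * (Nat.choose (m+1+j-1) (m+1-1)) / (Nat.factorial (m-j)) : ℝ) : ℂ)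
          * tsInt (m-j) (2 * Real.pi * 0) v := by
  intro v
  have := pointwise m 0 v
  simpa [mul_zero, Complex.ofReal_zero, zero_mul, Complex.exp_zero] using this

lemma gFun_integrable (m : ℕ) : Integrable (gFun (m+1)) := by
  rw [funext (gFun_eq_sum m)]
  exact integrable_finset_sum _ (fun j _ => (tsInt_integrable (m-j) _).const_mul _)

lemma gFun_continuous (ℓ : ℕ) : Continuous (gFun ℓ) := by
  unfold gFun pPoly
  fun_prop

lemma FG' (m : ℕ) (ξ : ℝ) :
    FourierTransform.fourier (gFun (m+1)) ξ
      = 2^(m+1) * ((1:ℂ)/(((1 + (2*Real.pi*ξ)^2 : ℝ)) : ℂ))^(m+1) := by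
  rw [FG, prodId]

lemma one_add_sq_pos (x : ℝ) : (0:ℝ) < 1 + x^2 := by positivity

lemma Fg_integrable (m : ℕ) : Integrable (FourierTransform.fourier (gFun (m+1))) := by
  rw [funext (FG' m)]
  have hmaj : Integrable (fun ξ : ℝ => 2^(m+1) * (1+(2*Real.pi*ξ)^2)⁻¹) := by
    have h1 : Integrable (fun ξ : ℝ => (1+(2*Real.pi*ξ)^2)⁻¹) := by
      have := integrable_inv_one_add_sq.comp_mul_left'
        (R := 2*Real.pi) (by positivity)
      simpa using this
    exact h1.const_mul _
  have hc : Continuous fun ξ : ℝ => 2^(m+1) * ((1:ℂ)/(((1 + (2*Real.pi*ξ)^2 : ℝ)) : ℂ))^(m+1) := by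
    apply continuous_const.mul
    apply Continuous.pow
    apply continuous_const.div
    · fun_prop
    · exact fun ξ => Complex.ofReal_ne_zero.mpr (one_add_sq_pos (2*Real.pi*ξ)).ne'
  refine hmaj.mono' hc.aestronglyMeasurable ?_
  filter_upwards with ξ
  have hpos := one_add_sq_pos (2*Real.pi*ξ)
  rw [norm_mul, norm_pow, norm_pow]
  have h2 : ‖(2:ℂ)‖ = 2 := by simp
  have h3 : ‖(1:ℂ)/(((1 + (2*Real.pi*ξ)^2 : ℝ)) : ℂ)‖ = (1+(2*Real.pi*ξ)^2)⁻¹ := by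
    rw [norm_div, norm_one, Complex.norm_real, Real.norm_eq_abs, abs_of_pos hpos, one_div]
  rw [h2, h3]
  have hb0 : (0:ℝ) ≤ (1+(2*Real.pi*ξ)^2)⁻¹ := by positivity
  have hb1 : (1+(2*Real.pi*ξ)^2)⁻¹ ≤ 1 := by
    rw [inv_le_one_iff₀]; right; nlinarith
  have := pow_le_of_le_one hb0 hb1 (Nat.succ_ne_zero m)
  calc (2:ℝ)^(m+1) * ((1+(2*Real.pi*ξ)^2)⁻¹)^(m+1)
      ≤ 2^(m+1) * (1+(2*Real.pi*ξ)^2)⁻¹ := by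
        apply mul_le_mul_of_nonneg_left this (by positivity)
    _ = _ := rfl

theorem stmt_3 (ℓ : ℕ) (hℓ : 1 ≤ ℓ) (w : ℝ) :
    (1 / (Real.sqrt (2 * Real.pi) : ℂ)) *
        ∫ t : ℝ, ((1 / (1 + t ^ 2) : ℝ) : ℂ) ^ ℓ * Complex.exp (-(Complex.I * t * w)) =
      (((1 / Real.sqrt (2 * Real.pi)) * (Real.pi / 2 ^ (ℓ - 1)) *
          Real.exp (-|w|) * pPoly ℓ |w| : ℝ) : ℂ) := by
  obtain ⟨m, rfl⟩ : ∃ m, ℓ = m+1 := ⟨ℓ-1, by omega⟩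
  have hinv : FourierTransform.fourier (FourierTransform.fourier (gFun (m+1))) w = gFun (m+1) w := by
    have e1 : FourierTransform.fourierInv (FourierTransform.fourier (gFun (m+1))) (-w)
        = gFun (m+1) (-w) :=
      (gFun_integrable m).fourierInv_fourier_eq (Fg_integrable m) (gFun_continuous (m+1)).continuousAt
    rw [Real.fourierInv_eq_fourier_neg, neg_neg] at e1
    rw [e1]
    simp [gFun, abs_neg]
  have hF2 : FourierTransform.fourier (FourierTransform.fourier (gFun (m+1))) w
      = 2^(m+1) * ∫ x : ℝ, (((1 / (1 + (2*Real.pi*x) ^ 2) : ℝ) : ℂ)) ^ (m+1)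
          * Complex.exp (-(Complex.I * ((2*Real.pi*x : ℝ) : ℂ) * w)) := by
    rw [Real.fourier_real_eq_integral_exp_smul, ← integral_const_mul]
    congr 1
    funext x
    rw [FG' m x, smul_eq_mul,
      show Complex.exp (((-2*Real.pi*x*w : ℝ):ℂ) * Complex.I)
          = Complex.exp (-(Complex.I * ((2*Real.pi*x : ℝ) : ℂ) * w)) from by congr 1; push_cast; ring,
      show (((1 / (1 + (2*Real.pi*x) ^ 2) : ℝ) : ℂ)) = (1:ℂ)/((1 + (2*Real.pi*x)^2 : ℝ):ℂ) from by
        push_cast; ring]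
    ring
  have hcv : ∫ t : ℝ, ((1 / (1 + t ^ 2) : ℝ) : ℂ) ^ (m+1) * Complex.exp (-(Complex.I * t * w))
      = (2*Real.pi) • ∫ x : ℝ, (((1 / (1 + (2*Real.pi*x) ^ 2) : ℝ) : ℂ)) ^ (m+1)
          * Complex.exp (-(Complex.I * ((2*Real.pi*x : ℝ) : ℂ) * w)) := by
    have h := MeasureTheory.Measure.integral_comp_mul_left
      (fun t : ℝ => ((1 / (1 + t ^ 2) : ℝ) : ℂ) ^ (m+1) * Complex.exp (-(Complex.I * t * w)))
      (2*Real.pi)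
    rw [h, abs_of_pos (by positivity : (0:ℝ) < (2*Real.pi)⁻¹), smul_smul,
      mul_inv_cancel₀ (by positivity : (2*Real.pi) ≠ 0), one_smul]
  have hJ : (∫ x : ℝ, (((1 / (1 + (2*Real.pi*x) ^ 2) : ℝ) : ℂ)) ^ (m+1)
        * Complex.exp (-(Complex.I * ((2*Real.pi*x : ℝ) : ℂ) * w)))
      = gFun (m+1) w / 2^(m+1) := by
    rw [eq_div_iff (by norm_num : (2:ℂ)^(m+1) ≠ 0), ← hinv, hF2]
    ring
  rw [hcv, hJ, show m+1-1 = m from rfl]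
  unfold gFun
  push_cast
  rw [Complex.real_smul]
  push_cast
  ring
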